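/- The value V(π/2) = 2π ∫₀^{π/2} ∫_{−π/2}^{π/2} τ · sin(τ cos v) dv dτ satisfies 13.7453 < V(π/2) < 13.7455. (This is the volume Vol(B(R₃)) ≈ 13.74539472 of the ball of radius R₃ = π/2 in equation (2.11) of the paper.) -/

import Mathlib

open Real intervalIntegral

private lemma nonneg_of_deriv (f f' : ℝ → ℝ) (hd : ∀ x, HasDerivAt f (f' x) x)
    (h0 : f 0 = 0) (hf' : ∀ y, 0 ≤ y → 0 ≤ f' y) {x : ℝ} (hx : 0 ≤ x) : 0 ≤ f x := by
  have hm : MonotoneOn f (Set.Ici 0) := by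
    apply monotoneOn_of_deriv_nonneg (convex_Ici 0)
    · exact fun y _ => (hd y).differentiableAt.continuousAt.continuousWithinAt
    · exact fun y _ => (hd y).differentiableAt.differentiableWithinAt
    · intro y hy
      rw [(hd y).deriv]
      exact hf' y (le_of_lt (by simpa using hy))
  calc (0:ℝ) = f 0 := h0.symm
    _ ≤ f x := hm (by simp) (by simpa using hx) hx

private lemma hasDerivAt_polyOdd (c1 c3 c5 c7 c9 c11 : ℝ) (y : ℝ) :
    HasDerivAt (fun x : ℝ => c1 * x + c3 * x ^ 3 + c5 * x ^ 5 + c7 * x ^ 7 + c9 * x ^ 9 + c11 * x ^ 11)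
      (c1 + 3 * c3 * y ^ 2 + 5 * c5 * y ^ 4 + 7 * c7 * y ^ 6 + 9 * c9 * y ^ 8 + 11 * c11 * y ^ 10) y := by
  have h := (((((((hasDerivAt_id y).const_mul c1).add ((hasDerivAt_pow 3 y).const_mul c3)).add
      ((hasDerivAt_pow 5 y).const_mul c5)).add ((hasDerivAt_pow 7 y).const_mul c7)).add
      ((hasDerivAt_pow 9 y).const_mul c9)).add ((hasDerivAt_pow 11 y).const_mul c11))
  refine h.congr_deriv ?_
  push_cast; ring

private lemma hasDerivAt_polyEven (c0 c2 c4 c6 c8 c10 : ℝ) (y : ℝ) :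
    HasDerivAt (fun x : ℝ => c0 + c2 * x ^ 2 + c4 * x ^ 4 + c6 * x ^ 6 + c8 * x ^ 8 + c10 * x ^ 10)
      (2 * c2 * y + 4 * c4 * y ^ 3 + 6 * c6 * y ^ 5 + 8 * c8 * y ^ 7 + 10 * c10 * y ^ 9) y := by
  have h := (((((hasDerivAt_const y c0).add ((hasDerivAt_pow 2 y).const_mul c2)).add
      ((hasDerivAt_pow 4 y).const_mul c4)).add ((hasDerivAt_pow 6 y).const_mul c6)).add
      ((hasDerivAt_pow 8 y).const_mul c8)).add ((hasDerivAt_pow 10 y).const_mul c10)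
  refine h.congr_deriv ?_
  push_cast; ring

private lemma cos_ge2 {x : ℝ} (hx : 0 ≤ x) : 1 + (-1/2) * x ^ 2 + 0 * x ^ 4 + 0 * x ^ 6 + 0 * x ^ 8 + 0 * x ^ 10 ≤ cos x := by
  have h : 0 ≤ cos x - (1 + (-1/2) * x ^ 2 + 0 * x ^ 4 + 0 * x ^ 6 + 0 * x ^ 8 + 0 * x ^ 10) := by
    refine nonneg_of_deriv (fun x : ℝ => cos x - (1 + (-1/2) * x ^ 2 + 0 * x ^ 4 + 0 * x ^ 6 + 0 * x ^ 8 + 0 * x ^ 10)) (fun y => -sin y - (2 * (-1/2) * y + 4 * 0 * y ^ 3 + 6 * 0 * y ^ 5 + 8 * 0 * y ^ 7 + 10 * 0 * y ^ 9)) (fun y => (Real.hasDerivAt_cos y).sub (hasDerivAt_polyEven 1 (-1/2) 0 0 0 0 y)) (by norm_num) (fun y hy => ?_) hx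
    have hp := Real.sin_le hy
    nlinarith [sq_nonneg y, pow_nonneg hy 2, pow_nonneg hy 4, pow_nonneg hy 6, pow_nonneg hy 8, pow_nonneg hy 10]
  linarith

private lemma sin_ge3 {x : ℝ} (hx : 0 ≤ x) : 1 * x + (-1/6) * x ^ 3 + 0 * x ^ 5 + 0 * x ^ 7 + 0 * x ^ 9 + 0 * x ^ 11 ≤ sin x := by
  have h : 0 ≤ sin x - (1 * x + (-1/6) * x ^ 3 + 0 * x ^ 5 + 0 * x ^ 7 + 0 * x ^ 9 + 0 * x ^ 11) := by
    refine nonneg_of_deriv (fun x : ℝ => sin x - (1 * x + (-1/6) * x ^ 3 + 0 * x ^ 5 + 0 * x ^ 7 + 0 * x ^ 9 + 0 * x ^ 11)) (fun y => cos y - (1 + 3 * (-1/6) * y ^ 2 + 5 * 0 * y ^ 4 + 7 * 0 * y ^ 6 + 9 * 0 * y ^ 8 + 11 * 0 * y ^ 10)) (fun y => (Real.hasDerivAt_sin y).sub (hasDerivAt_polyOdd 1 (-1/6) 0 0 0 0 y)) (by norm_num) (fun y hy => ?_) hx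
    have hp := cos_ge2 hy
    nlinarith [sq_nonneg y, pow_nonneg hy 2, pow_nonneg hy 4, pow_nonneg hy 6, pow_nonneg hy 8, pow_nonneg hy 10]
  linarith

private lemma cos_le4 {x : ℝ} (hx : 0 ≤ x) : cos x ≤ 1 + (-1/2) * x ^ 2 + (1/24) * x ^ 4 + 0 * x ^ 6 + 0 * x ^ 8 + 0 * x ^ 10 := by
  have h : 0 ≤ (1 + (-1/2) * x ^ 2 + (1/24) * x ^ 4 + 0 * x ^ 6 + 0 * x ^ 8 + 0 * x ^ 10) - cos x := by
    refine nonneg_of_deriv (fun x : ℝ => (1 + (-1/2) * x ^ 2 + (1/24) * x ^ 4 + 0 * x ^ 6 + 0 * x ^ 8 + 0 * x ^ 10) - cos x) (fun y => (2 * (-1/2) * y + 4 * (1/24) * y ^ 3 + 6 * 0 * y ^ 5 + 8 * 0 * y ^ 7 + 10 * 0 * y ^ 9) - -sin y) (fun y => (hasDerivAt_polyEven 1 (-1/2) (1/24) 0 0 0 y).sub (Real.hasDerivAt_cos y)) (by norm_num) (fun y hy => ?_) hx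
    have hp := sin_ge3 hy
    nlinarith [sq_nonneg y, pow_nonneg hy 2, pow_nonneg hy 4, pow_nonneg hy 6, pow_nonneg hy 8, pow_nonneg hy 10]
  linarith

private lemma sin_le5 {x : ℝ} (hx : 0 ≤ x) : sin x ≤ 1 * x + (-1/6) * x ^ 3 + (1/120) * x ^ 5 + 0 * x ^ 7 + 0 * x ^ 9 + 0 * x ^ 11 := by
  have h : 0 ≤ (1 * x + (-1/6) * x ^ 3 + (1/120) * x ^ 5 + 0 * x ^ 7 + 0 * x ^ 9 + 0 * x ^ 11) - sin x := by
    refine nonneg_of_deriv (fun x : ℝ => (1 * x + (-1/6) * x ^ 3 + (1/120) * x ^ 5 + 0 * x ^ 7 + 0 * x ^ 9 + 0 * x ^ 11) - sin x) (fun y => (1 + 3 * (-1/6) * y ^ 2 + 5 * (1/120) * y ^ 4 + 7 * 0 * y ^ 6 + 9 * 0 * y ^ 8 + 11 * 0 * y ^ 10) - cos y) (fun y => (hasDerivAt_polyOdd 1 (-1/6) (1/120) 0 0 0 y).sub (Real.hasDerivAt_sin y)) (by norm_num) (fun y hy => ?_) hx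
    have hp := cos_le4 hy
    nlinarith [sq_nonneg y, pow_nonneg hy 2, pow_nonneg hy 4, pow_nonneg hy 6, pow_nonneg hy 8, pow_nonneg hy 10]
  linarith

private lemma cos_ge6 {x : ℝ} (hx : 0 ≤ x) : 1 + (-1/2) * x ^ 2 + (1/24) * x ^ 4 + (-1/720) * x ^ 6 + 0 * x ^ 8 + 0 * x ^ 10 ≤ cos x := by
  have h : 0 ≤ cos x - (1 + (-1/2) * x ^ 2 + (1/24) * x ^ 4 + (-1/720) * x ^ 6 + 0 * x ^ 8 + 0 * x ^ 10) := by
    refine nonneg_of_deriv (fun x : ℝ => cos x - (1 + (-1/2) * x ^ 2 + (1/24) * x ^ 4 + (-1/720) * x ^ 6 + 0 * x ^ 8 + 0 * x ^ 10)) (fun y => -sin y - (2 * (-1/2) * y + 4 * (1/24) * y ^ 3 + 6 * (-1/720) * y ^ 5 + 8 * 0 * y ^ 7 + 10 * 0 * y ^ 9)) (fun y => (Real.hasDerivAt_cos y).sub (hasDerivAt_polyEven 1 (-1/2) (1/24) (-1/720) 0 0 y)) (by norm_num) (fun y hy => ?_) hx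
    have hp := sin_le5 hy
    nlinarith [sq_nonneg y, pow_nonneg hy 2, pow_nonneg hy 4, pow_nonneg hy 6, pow_nonneg hy 8, pow_nonneg hy 10]
  linarith

private lemma sin_ge7 {x : ℝ} (hx : 0 ≤ x) : 1 * x + (-1/6) * x ^ 3 + (1/120) * x ^ 5 + (-1/5040) * x ^ 7 + 0 * x ^ 9 + 0 * x ^ 11 ≤ sin x := by
  have h : 0 ≤ sin x - (1 * x + (-1/6) * x ^ 3 + (1/120) * x ^ 5 + (-1/5040) * x ^ 7 + 0 * x ^ 9 + 0 * x ^ 11) := by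
    refine nonneg_of_deriv (fun x : ℝ => sin x - (1 * x + (-1/6) * x ^ 3 + (1/120) * x ^ 5 + (-1/5040) * x ^ 7 + 0 * x ^ 9 + 0 * x ^ 11)) (fun y => cos y - (1 + 3 * (-1/6) * y ^ 2 + 5 * (1/120) * y ^ 4 + 7 * (-1/5040) * y ^ 6 + 9 * 0 * y ^ 8 + 11 * 0 * y ^ 10)) (fun y => (Real.hasDerivAt_sin y).sub (hasDerivAt_polyOdd 1 (-1/6) (1/120) (-1/5040) 0 0 y)) (by norm_num) (fun y hy => ?_) hx
    have hp := cos_ge6 hy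
    nlinarith [sq_nonneg y, pow_nonneg hy 2, pow_nonneg hy 4, pow_nonneg hy 6, pow_nonneg hy 8, pow_nonneg hy 10]
  linarith

private lemma cos_le8 {x : ℝ} (hx : 0 ≤ x) : cos x ≤ 1 + (-1/2) * x ^ 2 + (1/24) * x ^ 4 + (-1/720) * x ^ 6 + (1/40320) * x ^ 8 + 0 * x ^ 10 := by
  have h : 0 ≤ (1 + (-1/2) * x ^ 2 + (1/24) * x ^ 4 + (-1/720) * x ^ 6 + (1/40320) * x ^ 8 + 0 * x ^ 10) - cos x := by
    refine nonneg_of_deriv (fun x : ℝ => (1 + (-1/2) * x ^ 2 + (1/24) * x ^ 4 + (-1/720) * x ^ 6 + (1/40320) * x ^ 8 + 0 * x ^ 10) - cos x) (fun y => (2 * (-1/2) * y + 4 * (1/24) * y ^ 3 + 6 * (-1/720) * y ^ 5 + 8 * (1/40320) * y ^ 7 + 10 * 0 * y ^ 9) - -sin y) (fun y => (hasDerivAt_polyEven 1 (-1/2) (1/24) (-1/720) (1/40320) 0 y).sub (Real.hasDerivAt_cos y)) (by norm_num) (fun y hy => ?_) hx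
    have hp := sin_ge7 hy
    nlinarith [sq_nonneg y, pow_nonneg hy 2, pow_nonneg hy 4, pow_nonneg hy 6, pow_nonneg hy 8, pow_nonneg hy 10]
  linarith

private lemma sin_le9 {x : ℝ} (hx : 0 ≤ x) : sin x ≤ 1 * x + (-1/6) * x ^ 3 + (1/120) * x ^ 5 + (-1/5040) * x ^ 7 + (1/362880) * x ^ 9 + 0 * x ^ 11 := by
  have h : 0 ≤ (1 * x + (-1/6) * x ^ 3 + (1/120) * x ^ 5 + (-1/5040) * x ^ 7 + (1/362880) * x ^ 9 + 0 * x ^ 11) - sin x := by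
    refine nonneg_of_deriv (fun x : ℝ => (1 * x + (-1/6) * x ^ 3 + (1/120) * x ^ 5 + (-1/5040) * x ^ 7 + (1/362880) * x ^ 9 + 0 * x ^ 11) - sin x) (fun y => (1 + 3 * (-1/6) * y ^ 2 + 5 * (1/120) * y ^ 4 + 7 * (-1/5040) * y ^ 6 + 9 * (1/362880) * y ^ 8 + 11 * 0 * y ^ 10) - cos y) (fun y => (hasDerivAt_polyOdd 1 (-1/6) (1/120) (-1/5040) (1/362880) 0 y).sub (Real.hasDerivAt_sin y)) (by norm_num) (fun y hy => ?_) hx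
    have hp := cos_le8 hy
    nlinarith [sq_nonneg y, pow_nonneg hy 2, pow_nonneg hy 4, pow_nonneg hy 6, pow_nonneg hy 8, pow_nonneg hy 10]
  linarith

private lemma cos_ge10 {x : ℝ} (hx : 0 ≤ x) : 1 + (-1/2) * x ^ 2 + (1/24) * x ^ 4 + (-1/720) * x ^ 6 + (1/40320) * x ^ 8 + (-1/3628800) * x ^ 10 ≤ cos x := by
  have h : 0 ≤ cos x - (1 + (-1/2) * x ^ 2 + (1/24) * x ^ 4 + (-1/720) * x ^ 6 + (1/40320) * x ^ 8 + (-1/3628800) * x ^ 10) := by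
    refine nonneg_of_deriv (fun x : ℝ => cos x - (1 + (-1/2) * x ^ 2 + (1/24) * x ^ 4 + (-1/720) * x ^ 6 + (1/40320) * x ^ 8 + (-1/3628800) * x ^ 10)) (fun y => -sin y - (2 * (-1/2) * y + 4 * (1/24) * y ^ 3 + 6 * (-1/720) * y ^ 5 + 8 * (1/40320) * y ^ 7 + 10 * (-1/3628800) * y ^ 9)) (fun y => (Real.hasDerivAt_cos y).sub (hasDerivAt_polyEven 1 (-1/2) (1/24) (-1/720) (1/40320) (-1/3628800) y)) (by norm_num) (fun y hy => ?_) hx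
    have hp := sin_le9 hy
    nlinarith [sq_nonneg y, pow_nonneg hy 2, pow_nonneg hy 4, pow_nonneg hy 6, pow_nonneg hy 8, pow_nonneg hy 10]
  linarith

private lemma sin_ge11 {x : ℝ} (hx : 0 ≤ x) : 1 * x + (-1/6) * x ^ 3 + (1/120) * x ^ 5 + (-1/5040) * x ^ 7 + (1/362880) * x ^ 9 + (-1/39916800) * x ^ 11 ≤ sin x := by
  have h : 0 ≤ sin x - (1 * x + (-1/6) * x ^ 3 + (1/120) * x ^ 5 + (-1/5040) * x ^ 7 + (1/362880) * x ^ 9 + (-1/39916800) * x ^ 11) := by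
    refine nonneg_of_deriv (fun x : ℝ => sin x - (1 * x + (-1/6) * x ^ 3 + (1/120) * x ^ 5 + (-1/5040) * x ^ 7 + (1/362880) * x ^ 9 + (-1/39916800) * x ^ 11)) (fun y => cos y - (1 + 3 * (-1/6) * y ^ 2 + 5 * (1/120) * y ^ 4 + 7 * (-1/5040) * y ^ 6 + 9 * (1/362880) * y ^ 8 + 11 * (-1/39916800) * y ^ 10)) (fun y => (Real.hasDerivAt_sin y).sub (hasDerivAt_polyOdd 1 (-1/6) (1/120) (-1/5040) (1/362880) (-1/39916800) y)) (by norm_num) (fun y hy => ?_) hx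
    have hp := cos_ge10 hy
    nlinarith [sq_nonneg y, pow_nonneg hy 2, pow_nonneg hy 4, pow_nonneg hy 6, pow_nonneg hy 8, pow_nonneg hy 10]
  linarith


private lemma J1 : ∫ v in (-(π/2))..(π/2), cos v = 2 := by
  rw [integral_cos]; norm_num

private lemma J3 : ∫ v in (-(π/2))..(π/2), cos v ^ 3 = 4/3 := by
  rw [integral_cos_pow (n := 1)]
  simp only [pow_one]
  rw [J1]
  norm_num [Real.cos_pi_div_two]

private lemma J5 : ∫ v in (-(π/2))..(π/2), cos v ^ 5 = 16/15 := by
  rw [show (5:ℕ) = 3 + 2 from rfl, integral_cos_pow, J3]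
  norm_num [Real.cos_pi_div_two]

private lemma J7 : ∫ v in (-(π/2))..(π/2), cos v ^ 7 = 32/35 := by
  rw [show (7:ℕ) = 5 + 2 from rfl, integral_cos_pow, J5]
  norm_num [Real.cos_pi_div_two]

private lemma J9 : ∫ v in (-(π/2))..(π/2), cos v ^ 9 = 256/315 := by
  rw [show (9:ℕ) = 7 + 2 from rfl, integral_cos_pow, J7]
  norm_num [Real.cos_pi_div_two]

private lemma J11 : ∫ v in (-(π/2))..(π/2), cos v ^ 11 = 512/693 := by
  rw [show (11:ℕ) = 9 + 2 from rfl, integral_cos_pow, J9]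
  norm_num [Real.cos_pi_div_two]

private lemma integral_cos_poly (a b c d e f : ℝ) :
    ∫ v in (-(π/2))..(π/2), (a * cos v + b * cos v ^ 3 + c * cos v ^ 5 + d * cos v ^ 7
        + e * cos v ^ 9 + f * cos v ^ 11)
    = 2*a + (4/3)*b + (16/15)*c + (32/35)*d + (256/315)*e + (512/693)*f := by
  have ii : ∀ g : ℝ → ℝ, Continuous g → IntervalIntegrable g MeasureTheory.volume (-(π/2)) (π/2) :=
    fun g hg => hg.intervalIntegrable _ _
  rw [integral_add (ii _ (by fun_prop)) (ii _ (by fun_prop)),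
      integral_add (ii _ (by fun_prop)) (ii _ (by fun_prop)),
      integral_add (ii _ (by fun_prop)) (ii _ (by fun_prop)),
      integral_add (ii _ (by fun_prop)) (ii _ (by fun_prop)),
      integral_add (ii _ (by fun_prop)) (ii _ (by fun_prop))]
  simp only [integral_const_mul]
  rw [J1, J3, J5, J7, J9, J11]
  ring

private lemma integral_pow_poly (a b c d e f : ℝ) :
    ∫ τ in (0:ℝ)..(π/2), (a*τ^2 + b*τ^4 + c*τ^6 + d*τ^8 + e*τ^10 + f*τ^12)
    = a*(π/2)^3/3 + b*(π/2)^5/5 + c*(π/2)^7/7 + d*(π/2)^9/9 + e*(π/2)^11/11 + f*(π/2)^13/13 := by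
  have ii : ∀ g : ℝ → ℝ, Continuous g → IntervalIntegrable g MeasureTheory.volume 0 (π/2) :=
    fun g hg => hg.intervalIntegrable _ _
  rw [integral_add (ii _ (by fun_prop)) (ii _ (by fun_prop)),
      integral_add (ii _ (by fun_prop)) (ii _ (by fun_prop)),
      integral_add (ii _ (by fun_prop)) (ii _ (by fun_prop)),
      integral_add (ii _ (by fun_prop)) (ii _ (by fun_prop)),
      integral_add (ii _ (by fun_prop)) (ii _ (by fun_prop))]
  simp only [integral_const_mul, integral_pow]
  ring

private lemma inner_le {τ : ℝ} (hτ : 0 ≤ τ) :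
    ∫ v in (-(π/2))..(π/2), τ * sin (τ * cos v)
      ≤ 2*τ^2 + (-2/9)*τ^4 + (2/225)*τ^6 + (-2/11025)*τ^8 + (2/893025)*τ^10 + 0*τ^12 := by
  have h : (∫ v in (-(π/2))..(π/2), τ * sin (τ * cos v))
      ≤ ∫ v in (-(π/2))..(π/2), ((τ^2) * cos v + (-(τ^4/6)) * cos v ^ 3 + (τ^6/120) * cos v ^ 5
          + (-(τ^8/5040)) * cos v ^ 7 + (τ^10/362880) * cos v ^ 9 + 0 * cos v ^ 11) := by
    apply integral_mono_on (by linarith [pi_pos])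
      ((by fun_prop : Continuous fun v => τ * sin (τ * cos v)).intervalIntegrable _ _)
      ((by fun_prop : Continuous fun v => (τ^2) * cos v + (-(τ^4/6)) * cos v ^ 3
          + (τ^6/120) * cos v ^ 5 + (-(τ^8/5040)) * cos v ^ 7 + (τ^10/362880) * cos v ^ 9
          + 0 * cos v ^ 11).intervalIntegrable _ _)
    intro v hv
    have hc : 0 ≤ cos v := Real.cos_nonneg_of_mem_Icc hv
    have hy : 0 ≤ τ * cos v := mul_nonneg hτ hc
    have h9 := sin_le9 hy
    calc τ * sin (τ * cos v)
        ≤ τ * (1 * (τ * cos v) + (-1/6) * (τ * cos v) ^ 3 + (1/120) * (τ * cos v) ^ 5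
            + (-1/5040) * (τ * cos v) ^ 7 + (1/362880) * (τ * cos v) ^ 9 + 0 * (τ * cos v) ^ 11) :=
          mul_le_mul_of_nonneg_left h9 hτ
      _ = (τ^2) * cos v + (-(τ^4/6)) * cos v ^ 3 + (τ^6/120) * cos v ^ 5
            + (-(τ^8/5040)) * cos v ^ 7 + (τ^10/362880) * cos v ^ 9 + 0 * cos v ^ 11 := by ring
  rw [integral_cos_poly] at h
  linarith

private lemma inner_ge {τ : ℝ} (hτ : 0 ≤ τ) :
    2*τ^2 + (-2/9)*τ^4 + (2/225)*τ^6 + (-2/11025)*τ^8 + (2/893025)*τ^10 + (-2/108056025)*τ^12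
      ≤ ∫ v in (-(π/2))..(π/2), τ * sin (τ * cos v) := by
  have h : (∫ v in (-(π/2))..(π/2), ((τ^2) * cos v + (-(τ^4/6)) * cos v ^ 3 + (τ^6/120) * cos v ^ 5
          + (-(τ^8/5040)) * cos v ^ 7 + (τ^10/362880) * cos v ^ 9 + (-(τ^12/39916800)) * cos v ^ 11))
      ≤ ∫ v in (-(π/2))..(π/2), τ * sin (τ * cos v) := by
    apply integral_mono_on (by linarith [pi_pos])
      ((by fun_prop : Continuous fun v => (τ^2) * cos v + (-(τ^4/6)) * cos v ^ 3
          + (τ^6/120) * cos v ^ 5 + (-(τ^8/5040)) * cos v ^ 7 + (τ^10/362880) * cos v ^ 9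
          + (-(τ^12/39916800)) * cos v ^ 11).intervalIntegrable _ _)
      ((by fun_prop : Continuous fun v => τ * sin (τ * cos v)).intervalIntegrable _ _)
    intro v hv
    have hc : 0 ≤ cos v := Real.cos_nonneg_of_mem_Icc hv
    have hy : 0 ≤ τ * cos v := mul_nonneg hτ hc
    have h11 := sin_ge11 hy
    calc (τ^2) * cos v + (-(τ^4/6)) * cos v ^ 3 + (τ^6/120) * cos v ^ 5
            + (-(τ^8/5040)) * cos v ^ 7 + (τ^10/362880) * cos v ^ 9
            + (-(τ^12/39916800)) * cos v ^ 11
        = τ * (1 * (τ * cos v) + (-1/6) * (τ * cos v) ^ 3 + (1/120) * (τ * cos v) ^ 5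
            + (-1/5040) * (τ * cos v) ^ 7 + (1/362880) * (τ * cos v) ^ 9
            + (-1/39916800) * (τ * cos v) ^ 11) := by ring
      _ ≤ τ * sin (τ * cos v) := mul_le_mul_of_nonneg_left h11 hτ
  rw [integral_cos_poly] at h
  linarith

/-- The volume of the geodesic ball of radius `ρ` in `S² × ℝ` geometry
(Theorem 2.4 of the paper). -/
noncomputable def ballVol (ρ : ℝ) : ℝ :=
  2 * π * ∫ τ in (0 : ℝ)..ρ, ∫ v in (-(π / 2))..(π / 2), τ * Real.sin (τ * Real.cos v)

/-- The volume of the ball of radius `R₃ = π/2` (equation (2.11) of the paper):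
`Vol(B(R₃)) ≈ 13.74539472`. -/
theorem ballVol_pi_div_two_bounds :
    13.7453 < ballVol (π / 2) ∧ ballVol (π / 2) < 13.7455 := by
  have hcont : Continuous (fun τ : ℝ => ∫ v in (-(π/2))..(π/2), τ * sin (τ * cos v)) := by
    apply intervalIntegral.continuous_parametric_intervalIntegral_of_continuous'
      (μ := MeasureTheory.volume) (f := fun (τ v : ℝ) => τ * Real.sin (τ * Real.cos v))
    fun_prop
  have hpi2 : (0:ℝ) ≤ π / 2 := by linarith [pi_pos]
  have hup : (∫ τ in (0:ℝ)..(π/2), ∫ v in (-(π/2))..(π/2), τ * sin (τ * cos v))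
      ≤ ∫ τ in (0:ℝ)..(π/2), (2*τ^2 + (-2/9)*τ^4 + (2/225)*τ^6 + (-2/11025)*τ^8
          + (2/893025)*τ^10 + 0*τ^12) := by
    apply integral_mono_on hpi2 (hcont.intervalIntegrable _ _)
      ((by fun_prop : Continuous fun τ : ℝ => 2*τ^2 + (-2/9)*τ^4 + (2/225)*τ^6 + (-2/11025)*τ^8
          + (2/893025)*τ^10 + 0*τ^12).intervalIntegrable _ _)
    exact fun τ hτ => inner_le hτ.1
  have hlo : (∫ τ in (0:ℝ)..(π/2), (2*τ^2 + (-2/9)*τ^4 + (2/225)*τ^6 + (-2/11025)*τ^8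
          + (2/893025)*τ^10 + (-2/108056025)*τ^12))
      ≤ ∫ τ in (0:ℝ)..(π/2), ∫ v in (-(π/2))..(π/2), τ * sin (τ * cos v) := by
    apply integral_mono_on hpi2
      ((by fun_prop : Continuous fun τ : ℝ => 2*τ^2 + (-2/9)*τ^4 + (2/225)*τ^6 + (-2/11025)*τ^8
          + (2/893025)*τ^10 + (-2/108056025)*τ^12).intervalIntegrable _ _)
      (hcont.intervalIntegrable _ _)
    exact fun τ hτ => inner_ge hτ.1
  rw [integral_pow_poly] at hup hlo
  have hV : ballVol (π/2) = 2 * π * ∫ τ in (0:ℝ)..(π/2),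
      ∫ v in (-(π/2))..(π/2), τ * sin (τ * cos v) := rfl
  have hVup : ballVol (π/2) ≤ π^4/6 - π^6/360 + π^8/50400 - π^10/12700800 + π^12/5029516800 := by
    rw [hV]
    have := mul_le_mul_of_nonneg_left hup (by positivity : (0:ℝ) ≤ 2 * π)
    calc 2 * π * ∫ τ in (0:ℝ)..(π/2), ∫ v in (-(π/2))..(π/2), τ * sin (τ * cos v)
        ≤ 2 * π * (2*(π/2)^3/3 + (-2/9)*(π/2)^5/5 + (2/225)*(π/2)^7/7 + (-2/11025)*(π/2)^9/9
            + (2/893025)*(π/2)^11/11 + 0*(π/2)^13/13) := this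
      _ = π^4/6 - π^6/360 + π^8/50400 - π^10/12700800 + π^12/5029516800 := by ring
  have hVlo : π^4/6 - π^6/360 + π^8/50400 - π^10/12700800 + π^12/5029516800
      - π^14/2876883609600 ≤ ballVol (π/2) := by
    rw [hV]
    have := mul_le_mul_of_nonneg_left hlo (by positivity : (0:ℝ) ≤ 2 * π)
    calc π^4/6 - π^6/360 + π^8/50400 - π^10/12700800 + π^12/5029516800 - π^14/2876883609600
        = 2 * π * (2*(π/2)^3/3 + (-2/9)*(π/2)^5/5 + (2/225)*(π/2)^7/7 + (-2/11025)*(π/2)^9/9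
            + (2/893025)*(π/2)^11/11 + (-2/108056025)*(π/2)^13/13) := by ring
      _ ≤ 2 * π * ∫ τ in (0:ℝ)..(π/2), ∫ v in (-(π/2))..(π/2), τ * sin (τ * cos v) := this
  have hgt := Real.pi_gt_d6
  have hlt := Real.pi_lt_d6
  have hge : (0:ℝ) ≤ 3.141592 := by norm_num
  have p4l : (3.141592:ℝ)^4 < π^4 := pow_lt_pow_left₀ hgt hge (by norm_num)
  have p4u : π^4 < (3.141593:ℝ)^4 := pow_lt_pow_left₀ hlt pi_pos.le (by norm_num)
  have p6l : (3.141592:ℝ)^6 < π^6 := pow_lt_pow_left₀ hgt hge (by norm_num)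
  have p6u : π^6 < (3.141593:ℝ)^6 := pow_lt_pow_left₀ hlt pi_pos.le (by norm_num)
  have p8l : (3.141592:ℝ)^8 < π^8 := pow_lt_pow_left₀ hgt hge (by norm_num)
  have p8u : π^8 < (3.141593:ℝ)^8 := pow_lt_pow_left₀ hlt pi_pos.le (by norm_num)
  have p10l : (3.141592:ℝ)^10 < π^10 := pow_lt_pow_left₀ hgt hge (by norm_num)
  have p10u : π^10 < (3.141593:ℝ)^10 := pow_lt_pow_left₀ hlt pi_pos.le (by norm_num)
  have p12l : (3.141592:ℝ)^12 < π^12 := pow_lt_pow_left₀ hgt hge (by norm_num)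
  have p12u : π^12 < (3.141593:ℝ)^12 := pow_lt_pow_left₀ hlt pi_pos.le (by norm_num)
  have p14u : π^14 < (3.141593:ℝ)^14 := pow_lt_pow_left₀ hlt pi_pos.le (by norm_num)
  constructor
  · have key : (13.7453:ℝ) < (3.141592:ℝ)^4/6 - (3.141593:ℝ)^6/360 + (3.141592:ℝ)^8/50400
        - (3.141593:ℝ)^10/12700800 + (3.141592:ℝ)^12/5029516800
        - (3.141593:ℝ)^14/2876883609600 := by norm_num
    linarith
  · have key : (3.141593:ℝ)^4/6 - (3.141592:ℝ)^6/360 + (3.141593:ℝ)^8/50400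
        - (3.141592:ℝ)^10/12700800 + (3.141593:ℝ)^12/5029516800 < (13.7455:ℝ) := by norm_num
    linarith
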